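/- For all integers n ≥ 0 and m ≥ 1, the m-fold convolution of Catalan numbers satisfies Σ over all (i_1,…,i_m) ∈ ℕ^m with i_1 + ⋯ + i_m = n of Π_{j=1}^{m} C_{i_j} equals (m/(2n+m)) · C(2n+m, n); equivalently, (2n+m) · Σ_{i_1+⋯+i_m=n} Π_{j=1}^{m} C_{i_j} = m · C(2n+m, n), where C_i denotes the i-th Catalan number and C(a,b) the binomial coefficient. -/

import Mathlib

open PowerSeries Finset

noncomputable def F : PowerSeries ℕ := PowerSeries.mk catalan

lemma coeff_F (n : ℕ) : (PowerSeries.coeff (R := ℕ) n) F = catalan n := coeff_mk n catalan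

lemma coeff_pow_catalan (m n : ℕ) :
    (PowerSeries.coeff (R := ℕ) n) (F ^ m) =
      ∑ v ∈ Finset.Nat.antidiagonalTuple m n, ∏ j, catalan (v j) := by
  induction m generalizing n with
  | zero =>
    cases n with
    | zero => simp [Finset.Nat.antidiagonalTuple_zero_zero]
    | succ n => simp [Finset.Nat.antidiagonalTuple_zero_succ]
  | succ m ih =>
    rw [pow_succ', PowerSeries.coeff_mul]
    simp_rw [coeff_F, ih, Finset.mul_sum]
    rw [Finset.sum_sigma']
    refine Finset.sum_nbij' (fun x => Fin.cons x.1.1 x.2)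
      (fun v => ⟨(v 0, ∑ i, Fin.tail v i), Fin.tail v⟩) ?_ ?_ ?_ ?_ ?_
    · rintro ⟨⟨a, b⟩, w⟩ h
      simp only [Finset.mem_sigma, Finset.HasAntidiagonal.mem_antidiagonal,
        Finset.Nat.mem_antidiagonalTuple] at h ⊢
      rw [Fin.sum_cons, h.2, h.1]
    · intro v hv
      simp only [Finset.Nat.mem_antidiagonalTuple] at hv
      simp only [Finset.mem_sigma, Finset.HasAntidiagonal.mem_antidiagonal,
        Finset.Nat.mem_antidiagonalTuple]
      refine ⟨?_, trivial⟩
      rw [← hv, Fin.sum_univ_succ]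
      rfl
    · rintro ⟨⟨a, b⟩, w⟩ h
      simp only [Finset.mem_sigma, Finset.HasAntidiagonal.mem_antidiagonal,
        Finset.Nat.mem_antidiagonalTuple] at h
      simp [Fin.cons_zero, Fin.tail_cons, h.2]
    · intro v hv
      simp [Fin.cons_self_tail]
    · rintro ⟨⟨a, b⟩, w⟩ h
      simp [Fin.prod_univ_succ]

lemma F_eq : F = 1 + PowerSeries.X * F ^ 2 := by
  ext n
  cases n with
  | zero => simp [F, catalan_zero]
  | succ n =>
    rw [map_add, PowerSeries.coeff_succ_X_mul, sq, PowerSeries.coeff_mul]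
    simp only [F, coeff_mk, PowerSeries.coeff_one, n.succ_ne_zero, if_false, zero_add]
    exact catalan_succ' n

lemma pow_rec (m n : ℕ) :
    (PowerSeries.coeff (R := ℕ) (n+1)) (F ^ (m+1)) =
      (PowerSeries.coeff (R := ℕ) (n+1)) (F ^ m) + (PowerSeries.coeff (R := ℕ) n) (F ^ (m+2)) := by
  rw [pow_succ]
  nth_rewrite 2 [F_eq]
  rw [mul_add, mul_one, map_add, ← mul_assoc, mul_comm (F ^ m) PowerSeries.X, mul_assoc,
    PowerSeries.coeff_succ_X_mul, ← pow_add]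

lemma key (n : ℕ) : ∀ m : ℕ, (2 * n + m) * (PowerSeries.coeff (R := ℕ) n) (F ^ m) =
    m * Nat.choose (2 * n + m) n := by
  induction n with
  | zero =>
    intro m
    have hc : (PowerSeries.constantCoeff (R := ℕ)) F = 1 := by
      rw [← PowerSeries.coeff_zero_eq_constantCoeff, coeff_F, catalan_zero]
    simp [hc]
  | succ n ih =>
    intro m
    induction m with
    | zero =>
      have : (PowerSeries.coeff (R := ℕ) (n+1)) (F ^ 0) = 0 := by simp
      simp [this]
    | succ m ihm =>
      rw [pow_rec]
      set N := 2 * n + (m + 2) with hN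
      have h1 : N * (PowerSeries.coeff (R := ℕ) (n+1)) (F ^ m) = m * Nat.choose N (n+1) := by
        have := ihm
        have e : 2 * (n+1) + m = N := by omega
        rwa [e] at this
      have h2 : N * (PowerSeries.coeff (R := ℕ) n) (F ^ (m+2)) = (m+2) * Nat.choose N n := ih (m+2)
      have e2 : 2 * (n+1) + (m+1) = N + 1 := by omega
      rw [e2]
      have hpascal : Nat.choose (N+1) (n+1) = Nat.choose N n + Nat.choose N (n+1) :=
        Nat.choose_succ_succ N n
      have hkey : Nat.choose N (n+1) * (n+1) = Nat.choose N n * (N - n) :=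
        Nat.choose_succ_right_eq N n
      have hNn : N - n = n + m + 2 := by omega
      rw [hNn] at hkey
      have hNpos : 0 < N := by omega
      apply Nat.eq_of_mul_eq_mul_left hNpos
      set a := (PowerSeries.coeff (R := ℕ) (n+1)) (F ^ m)
      set b := (PowerSeries.coeff (R := ℕ) n) (F ^ (m+2))
      set x := Nat.choose N n
      set y := Nat.choose N (n+1)
      rw [hpascal]
      zify
      zify at h1 h2 hkey
      nlinarith [h1, h2, hkey]

theorem catalan_convolution (n m : ℕ) (hm : 1 ≤ m) :
    (2 * n + m) *
        ∑ v ∈ Finset.Nat.antidiagonalTuple m n, ∏ j, catalan (v j) =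
      m * Nat.choose (2 * n + m) n := by
  rw [← coeff_pow_catalan]
  exact key n m
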